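/- Define rational functions A_k(t) recursively by A_1(t) = 1 and A_k(t) = 1 - t/A_{k-1}(t). Then for each i ≥ 1, the function f_i(t) := 1 - A_{i+1}(t)/A_i(t) satisfies the identity f_i(t) = t^i / ∏_{k=1}^{i-1} (1 - f_k(t))^{2(i-k)}, as an identity of rational functions (equivalently, for all real t where all quantities are defined and denominators nonzero). -/

import Mathlib

/-- The continued-fraction recursion `A_1(t) = 1`, `A_k(t) = 1 - t/A_{k-1}(t)`. -/
noncomputable def contA : ℕ → ℝ → ℝ
  | 0, _ => 1
  | 1, _ => 1
  | (k + 2), t => 1 - t / contA (k + 1) t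

/-- `f_i(t) = 1 - A_{i+1}(t)/A_i(t)`. -/
noncomputable def fF (i : ℕ) (t : ℝ) : ℝ := 1 - contA (i + 1) t / contA i t


lemma fF_one (t : ℝ) : fF 1 t = t := by
  simp [fF, contA]

lemma one_sub_fF (k : ℕ) (t : ℝ) : 1 - fF k t = contA (k + 1) t / contA k t := by
  simp [fF]

lemma fF_succ (j : ℕ) (t : ℝ) (h1 : contA (j + 1) t ≠ 0) (h2 : contA (j + 2) t ≠ 0) :
    fF (j + 2) t * (contA (j + 2) t) ^ 2 = t * fF (j + 1) t := by
  set a := contA (j + 1) t with ha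
  have hb : contA (j + 2) t = (a - t) / a := by
    rw [show contA (j + 2) t = 1 - t / contA (j + 1) t from rfl, ← ha]
    field_simp
  have hat : a - t ≠ 0 := by
    intro h
    apply h2
    rw [hb, h, zero_div]
  have hA3 : contA (j + 3) t = 1 - t / contA (j + 2) t := rfl
  simp only [fF]
  rw [hA3, show contA (j + 1 + 1) t = contA (j + 2) t from rfl, hb]
  rw [← ha]
  field_simp
  ring

lemma key1 (i : ℕ) (hi : 1 ≤ i) (t : ℝ)
    (hA : ∀ k, 1 ≤ k → k ≤ i → contA k t ≠ 0) :
    fF i t * ∏ k ∈ Finset.Icc 2 i, (contA k t) ^ 2 = t ^ i := by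
  induction i with
  | zero => omega
  | succ n ih =>
    rcases Nat.lt_or_ge n 1 with hn | hn
    · interval_cases n
      simp [fF_one]
    · have hstep := fF_succ (n - 1) t
        (by have := hA n (by omega) (by omega); rwa [show n - 1 + 1 = n by omega])
        (by have := hA (n+1) (by omega) (by omega); rwa [show n - 1 + 2 = n + 1 by omega])
      rw [show n - 1 + 2 = n + 1 by omega, show n - 1 + 1 = n by omega] at hstep
      rw [Finset.prod_Icc_succ_top (by omega)]
      calc fF (n+1) t * ((∏ k ∈ Finset.Icc 2 n, contA k t ^ 2) * contA (n+1) t ^ 2)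
            = (fF (n+1) t * contA (n+1) t ^ 2) * ∏ k ∈ Finset.Icc 2 n, contA k t ^ 2 := by ring
        _ = t * (fF n t * ∏ k ∈ Finset.Icc 2 n, contA k t ^ 2) := by rw [hstep]; ring
        _ = t * t ^ n := by rw [ih hn (fun k h1 h2 => hA k h1 (by omega))]
        _ = t ^ (n+1) := by rw [pow_succ]; ring

lemma telescope (m : ℕ) (t : ℝ) (hA : ∀ k, 1 ≤ k → k ≤ m → contA k t ≠ 0) :
    ∏ k ∈ Finset.Icc 1 m, (1 - fF k t) = contA (m + 1) t := by
  induction m with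
  | zero => simp [contA]
  | succ n ih =>
    rw [Finset.prod_Icc_succ_top (by omega), ih (fun k h1 h2 => hA k h1 (by omega)),
      one_sub_fF]
    rw [mul_div_assoc']
    rw [mul_comm, mul_div_assoc, div_self (hA (n+1) (by omega) (by omega)), mul_one]

lemma key2 (i : ℕ) (hi : 1 ≤ i) (t : ℝ)
    (hA : ∀ k, 1 ≤ k → k ≤ i → contA k t ≠ 0) :
    ∏ k ∈ Finset.Icc 1 (i - 1), (1 - fF k t) ^ (2 * (i - k)) =
      ∏ k ∈ Finset.Icc 2 i, (contA k t) ^ 2 := by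
  induction i with
  | zero => omega
  | succ n ih =>
    rcases Nat.lt_or_ge n 1 with hn | hn
    · interval_cases n
      simp
    · have ih' := ih hn (fun k h1 h2 => hA k h1 (by omega))
      have hsplit : ∀ k ∈ Finset.Icc 1 n, (1 - fF k t) ^ (2 * (n + 1 - k)) =
          (1 - fF k t) ^ (2 * (n - k)) * (1 - fF k t) ^ 2 := by
        intro k hk
        rw [← pow_add]
        congr 1
        simp only [Finset.mem_Icc] at hk
        omega
      rw [show n + 1 - 1 = n by omega, Finset.prod_congr rfl hsplit, Finset.prod_mul_distrib,
        Finset.prod_pow, telescope n t (fun k h1 h2 => hA k h1 (by omega))]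
      have hlast : ∏ k ∈ Finset.Icc 1 n, (1 - fF k t) ^ (2 * (n - k)) =
          ∏ k ∈ Finset.Icc 1 (n - 1), (1 - fF k t) ^ (2 * (n - k)) := by
        rw [show n = (n - 1) + 1 by omega] 
        rw [Finset.prod_Icc_succ_top (by omega)]
        rw [show n - 1 + 1 = n by omega, Nat.sub_self, mul_zero, pow_zero, mul_one]
      rw [hlast, ih', Finset.prod_Icc_succ_top (by omega)]

theorem f_key_identity (i : ℕ) (hi : 1 ≤ i) (t : ℝ)
    (hA : ∀ k, 1 ≤ k → k ≤ i + 1 → contA k t ≠ 0) :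
    fF i t = t ^ i / ∏ k ∈ Finset.Icc 1 (i - 1), (1 - fF k t) ^ (2 * (i - k)) := by
  have hA' : ∀ k, 1 ≤ k → k ≤ i → contA k t ≠ 0 := fun k h1 h2 => hA k h1 (by omega)
  rw [key2 i hi t hA']
  have hQ : ∏ k ∈ Finset.Icc 2 i, (contA k t) ^ 2 ≠ 0 := by
    apply Finset.prod_ne_zero_iff.mpr
    intro k hk
    simp only [Finset.mem_Icc] at hk
    exact pow_ne_zero _ (hA' k (by omega) hk.2)
  rw [eq_div_iff hQ]
  exact key1 i hi t hA'
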